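/- For every field K of characteristic zero, every q ∈ K, every n ≥ 1, every k ≥ 1, and all polynomials p, r ∈ K[x_1,…,x_n], one has B(P_k(p), r) = B(p, P_k^*(r)); that is, the dual operator P_k^* is the adjoint of P_k with respect to the bilinear form B. -/

import Mathlib

open MvPolynomial

/-- The `q`-Steenrod operator `P_k` on `K[x_1,…,x_n]`:
`P_k(p) = ∑ i, x_i^k • (p + q • x_i • ∂p/∂x_i)`. -/
noncomputable def steenrodP (K : Type) [Field K] (q : K) (n k : ℕ) :
    Module.End K (MvPolynomial (Fin n) K) :=
  ∑ i : Fin n, (LinearMap.mulLeft K (X i ^ k : MvPolynomial (Fin n) K)) ∘ₗ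
    (LinearMap.id + q • ((LinearMap.mulLeft K (X i : MvPolynomial (Fin n) K)) ∘ₗ
      (pderiv i).toLinearMap))

/-- The dual `q`-Steenrod operator `P_k^*` on `K[x_1,…,x_n]`:
`P_k^*(p) = ∑ i, (∂^k p/∂x_i^k + q • x_i • ∂^{k+1} p/∂x_i^{k+1})`. -/
noncomputable def steenrodPdual (K : Type) [Field K] (q : K) (n k : ℕ) :
    Module.End K (MvPolynomial (Fin n) K) :=
  ∑ i : Fin n,
    ((((pderiv i).toLinearMap : Module.End K (MvPolynomial (Fin n) K)) ^ k)
      + q • ((LinearMap.mulLeft K (X i : MvPolynomial (Fin n) K)) ∘ₗ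
          ((((pderiv i).toLinearMap : Module.End K (MvPolynomial (Fin n) K)) ^ (k+1) : Module.End K (MvPolynomial (Fin n) K)) : MvPolynomial (Fin n) K →ₗ[K] MvPolynomial (Fin n) K)))

/-- The bilinear form `B(p,r) = ∑_m m! ⬝ p_m ⬝ r_m` over exponent vectors `m`. -/
noncomputable def formB {K : Type} [Field K] {n : ℕ} (p r : MvPolynomial (Fin n) K) : K :=
  ∑ m ∈ p.support, (∏ i, ((m i).factorial : K)) * p.coeff m * r.coeff m

/-- `p` is `q`-harmonic if it is killed by all the dual `q`-Steenrod operators. -/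
def IsQHarmonic {K : Type} [Field K] {n : ℕ} (q : K) (p : MvPolynomial (Fin n) K) : Prop :=
  ∀ k : ℕ, 1 ≤ k → steenrodPdual K q n k p = 0

/-- The space of `q`-hit polynomials: the span of the ranges of the `P_k`, `k ≥ 1`. -/
noncomputable def qHit (K : Type) [Field K] (q : K) (n : ℕ) :
    Submodule K (MvPolynomial (Fin n) K) :=
  Submodule.span K (⋃ k ∈ {k : ℕ | 1 ≤ k}, Set.range (steenrodP K q n k))

/-- For a list `λ = [λ_1, …, λ_m]`, the operator `P_λ = P_{λ_1} ∘ ⋯ ∘ P_{λ_m}`. -/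
noncomputable def steenrodPList (K : Type) [Field K] (q : K) (n : ℕ) (l : List ℕ) :
    Module.End K (MvPolynomial (Fin n) K) :=
  (l.map (steenrodP K q n)).prod

variable {K : Type} [Field K] {n : ℕ}

lemma formB_eq_sum {p r : MvPolynomial (Fin n) K} {s : Finset (Fin n →₀ ℕ)}
    (hs : p.support ⊆ s) :
    formB p r = ∑ m ∈ s, (∏ i, ((m i).factorial : K)) * p.coeff m * r.coeff m := by
  unfold formB
  exact Finset.sum_subset hs (fun m _ hm => by
    simp [MvPolynomial.notMem_support_iff.mp hm])

lemma formB_comm (p r : MvPolynomial (Fin n) K) : formB p r = formB r p := by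
  rw [formB_eq_sum (s := p.support ∪ r.support) Finset.subset_union_left,
    formB_eq_sum (s := p.support ∪ r.support) Finset.subset_union_right]
  exact Finset.sum_congr rfl fun m _ => by ring

lemma formB_zero_left (r : MvPolynomial (Fin n) K) : formB 0 r = 0 := by
  simp [formB]

lemma formB_add_left (p p' r : MvPolynomial (Fin n) K) :
    formB (p + p') r = formB p r + formB p' r := by
  rw [formB_eq_sum (s := p.support ∪ p'.support) (MvPolynomial.support_add),
    formB_eq_sum (s := p.support ∪ p'.support) Finset.subset_union_left,
    formB_eq_sum (s := p.support ∪ p'.support) Finset.subset_union_right,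
    ← Finset.sum_add_distrib]
  exact Finset.sum_congr rfl fun m _ => by rw [MvPolynomial.coeff_add]; ring

lemma formB_smul_left (c : K) (p r : MvPolynomial (Fin n) K) :
    formB (c • p) r = c * formB p r := by
  rw [formB_eq_sum (s := p.support) (MvPolynomial.support_smul),
    formB, Finset.mul_sum]
  exact Finset.sum_congr rfl fun m _ => by rw [MvPolynomial.coeff_smul]; simp; ring

lemma formB_add_right (p r r' : MvPolynomial (Fin n) K) :
    formB p (r + r') = formB p r + formB p r' := by
  rw [formB_comm, formB_add_left, formB_comm r p, formB_comm r' p]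

lemma formB_smul_right (c : K) (p r : MvPolynomial (Fin n) K) :
    formB p (c • r) = c * formB p r := by
  rw [formB_comm, formB_smul_left, formB_comm]

lemma formB_monomial (a b : Fin n →₀ ℕ) (c d : K) :
    formB (monomial a c) (monomial b d)
      = if a = b then (∏ j, ((a j).factorial : K)) * c * d else 0 := by
  classical
  unfold formB
  rcases eq_or_ne c 0 with rfl | hc
  · simp
  · rw [MvPolynomial.support_monomial, if_neg hc, Finset.sum_singleton,
      MvPolynomial.coeff_monomial, MvPolynomial.coeff_monomial, if_pos rfl]
    by_cases h : a = b
    · rw [if_pos h.symm, if_pos h]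
    · rw [if_neg (Ne.symm h), if_neg h, mul_zero]

lemma formB_X_mul_monomial (i : Fin n) (a b : Fin n →₀ ℕ) (c d : K) :
    formB (X i * monomial a c) (monomial b d)
      = formB (monomial a c) (pderiv i (monomial b d)) := by
  classical
  have hX : (X i : MvPolynomial (Fin n) K) * monomial a c
      = monomial (Finsupp.single i 1 + a) c := by
    rw [X, monomial_mul, one_mul]
  rw [hX, pderiv_monomial, formB_monomial, formB_monomial]
  by_cases hb : b i = 0
  · rw [if_neg (fun h => by
      have := DFunLike.congr_fun h i
      simp [hb] at this)]
    split_ifs with h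
    · simp [hb]
    · rfl
  · have hb' : 0 < b i := Nat.pos_of_ne_zero hb
    by_cases h : a = b - Finsupp.single i 1
    · have hab : Finsupp.single i 1 + a = b := by
        subst h
        ext j
        by_cases hj : j = i
        · subst hj
          simp [Finsupp.single_apply, Finsupp.tsub_apply]
          omega
        · simp [Finsupp.single_apply, Ne.symm hj, hj]
      rw [if_pos hab, if_pos h, hab]
      have hsub : ∀ j, ((b - Finsupp.single i 1 : Fin n →₀ ℕ) j) = if j = i then b i - 1 else b j := by
        intro j
        by_cases hj : j = i
        · subst hj; simp [Finsupp.tsub_apply]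
        · simp [Finsupp.tsub_apply, Finsupp.single_apply, Ne.symm hj, hj]
      have hprod : (∏ j, ((b j).factorial : K))
          = (b i : K) * ∏ j, (((((b - Finsupp.single i 1 : Fin n →₀ ℕ) j))).factorial : K) := by
        rw [← Finset.mul_prod_erase Finset.univ (fun j => ((b j).factorial : K))
            (Finset.mem_univ i),
          ← Finset.mul_prod_erase Finset.univ
            (fun j => (((((b - Finsupp.single i 1 : Fin n →₀ ℕ) j))).factorial : K)) (Finset.mem_univ i),
          ← mul_assoc]
        congr 1
        · rw [hsub i, if_pos rfl]
          norm_cast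
          exact congrArg Nat.cast (Nat.mul_factorial_pred hb'.ne').symm
        · exact Finset.prod_congr rfl fun j hj => by
            rw [hsub j, if_neg (Finset.ne_of_mem_erase hj)]
      rw [h, hprod]
      push_cast
      ring
    · rw [if_neg (fun hab => h (by
        ext j
        have h1 := DFunLike.congr_fun hab j
        simp only [Finsupp.coe_add, Pi.add_apply, Finsupp.single_apply] at h1
        rw [Finsupp.tsub_apply, Finsupp.single_apply]
        by_cases hj : i = j
        · rw [if_pos hj] at h1 ⊢
          omega
        · rw [if_neg hj] at h1 ⊢
          omega)), if_neg h]

lemma formB_X_mul (i : Fin n) (p r : MvPolynomial (Fin n) K) :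
    formB (X i * p) r = formB p (pderiv i r) := by
  induction p using MvPolynomial.induction_on' with
  | monomial a c =>
    induction r using MvPolynomial.induction_on' with
    | monomial b d => exact formB_X_mul_monomial i a b c d
    | add r1 r2 ih1 ih2 => rw [map_add, formB_add_right, formB_add_right, ih1, ih2]
  | add p1 p2 ih1 ih2 => rw [mul_add, formB_add_left, formB_add_left, ih1, ih2]

lemma formB_X_pow_mul (i : Fin n) (k : ℕ) (p r : MvPolynomial (Fin n) K) :
    formB (X i ^ k * p) r
      = formB p ((((pderiv i).toLinearMap : Module.End K (MvPolynomial (Fin n) K)) ^ k) r) := by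
  induction k generalizing p r with
  | zero => simp
  | succ k ih =>
    rw [pow_succ, mul_assoc, ih, formB_X_mul, pow_succ', Module.End.mul_apply]
    rfl

lemma formB_sum_left {α : Type*} (s : Finset α) (f : α → MvPolynomial (Fin n) K)
    (r : MvPolynomial (Fin n) K) :
    formB (∑ a ∈ s, f a) r = ∑ a ∈ s, formB (f a) r := by
  classical
  induction s using Finset.induction_on with
  | empty => simp [formB_zero_left]
  | @insert a s h ih => rw [Finset.sum_insert h, Finset.sum_insert h, formB_add_left, ih]

lemma formB_sum_right {α : Type*} (s : Finset α) (f : α → MvPolynomial (Fin n) K)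
    (p : MvPolynomial (Fin n) K) :
    formB p (∑ a ∈ s, f a) = ∑ a ∈ s, formB p (f a) := by
  rw [formB_comm, formB_sum_left]
  exact Finset.sum_congr rfl fun a _ => formB_comm _ _

/-- `P_k^*` is the adjoint of `P_k` with respect to the bilinear form
`B(p,r) = ∑_m m! ⬝ p_m ⬝ r_m`. -/
theorem formB_steenrodP_adjoint (K : Type) [Field K] [CharZero K] (q : K)
    (n : ℕ) (hn : 1 ≤ n) (k : ℕ) (hk : 1 ≤ k)
    (p r : MvPolynomial (Fin n) K) :
    formB (steenrodP K q n k p) r = formB p (steenrodPdual K q n k r) := by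
  unfold steenrodP steenrodPdual
  rw [LinearMap.sum_apply, LinearMap.sum_apply, formB_sum_left, formB_sum_right]
  refine Finset.sum_congr rfl fun i _ => ?_
  simp only [LinearMap.comp_apply, LinearMap.add_apply, LinearMap.smul_apply,
    LinearMap.id_apply, LinearMap.mulLeft_apply, LinearMap.coe_mk, AddHom.coe_mk,
    Derivation.coeFn_coe]
  rw [mul_add, formB_add_left, formB_add_right]
  congr 1
  · exact formB_X_pow_mul i k p r
  · rw [mul_smul_comm, formB_smul_left, formB_smul_right]
    congr 1
    rw [← mul_assoc, ← pow_succ, formB_X_pow_mul i (k+1) _ r]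
    rw [formB_comm p _, formB_X_mul, formB_comm]
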